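/- Every nonzero nonunit element z of R is an associate (i.e., equal up to multiplication by a unit of R) of exactly one element of the following list: x^α for some integer α ≥ 1, y^β for some integer β ≥ 1, or x^α + a·y^β for some integers α, β ≥ 1 and some a ∈ ℂ with a ≠ 0; moreover in the mixed case the triple (α, β, a) is uniquely determined by z. -/

import Mathlib

set_option maxHeartbeats 1000000


noncomputable section

open MvPolynomial

/-- The polynomial ring `ℂ[x,y]`. -/
abbrev Pc : Type := MvPolynomial (Fin 2) ℂ

/-- The ideal `(xy)` of `ℂ[x,y]`. -/
def nodeIdeal : Ideal Pc := Ideal.span {X 0 * X 1}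

/-- The affine coordinate ring `ℂ[x,y]/(xy)` of the node. -/
abbrev Anode : Type := Pc ⧸ nodeIdeal

/-- The class of `x` in `ℂ[x,y]/(xy)`. -/
def xA : Anode := Ideal.Quotient.mk nodeIdeal (X 0)

/-- The class of `y` in `ℂ[x,y]/(xy)`. -/
def yA : Anode := Ideal.Quotient.mk nodeIdeal (X 1)

/-- The maximal ideal `(x,y)` of `ℂ[x,y]/(xy)`. -/
def mA : Ideal Anode := Ideal.span {xA, yA}

/-- Evaluation of polynomials at the origin. -/
def evalO : Pc →+* ℂ := (aeval (fun _ => (0:ℂ)) : Pc →ₐ[ℂ] ℂ).toRingHom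

lemma node_le_ker : nodeIdeal ≤ RingHom.ker evalO := by
  rw [nodeIdeal, Ideal.span_le, Set.singleton_subset_iff]
  simp [evalO, RingHom.mem_ker]

/-- Evaluation at the origin, descended to `ℂ[x,y]/(xy)`. -/
def εA : Anode →+* ℂ := Ideal.Quotient.lift nodeIdeal evalO node_le_ker

lemma sub_const_mem (p : Pc) :
    p - C (constantCoeff p) ∈ (Ideal.span {(X 0 : Pc), X 1}) := by
  induction p using MvPolynomial.induction_on with
  | C a => simp
  | add p q hp hq =>
      have : p + q - C (constantCoeff (p + q)) =
          (p - C (constantCoeff p)) + (q - C (constantCoeff q)) := by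
        rw [map_add, map_add]; ring
      rw [this]; exact Ideal.add_mem _ hp hq
  | mul_X p i hp =>
      have h0 : constantCoeff (p * X i) = 0 := by
        rw [map_mul, constantCoeff_X, mul_zero]
      rw [h0, map_zero, sub_zero]
      refine Ideal.mul_mem_left _ p (Ideal.subset_span ?_)
      fin_cases i <;> simp

lemma mA_eq_ker : mA = RingHom.ker εA := by
  apply le_antisymm
  · rw [mA, Ideal.span_le]
    rintro z hz
    simp only [Set.mem_insert_iff, Set.mem_singleton_iff] at hz
    rcases hz with rfl | rfl <;>
      simp [RingHom.mem_ker, xA, yA, εA, evalO, Ideal.Quotient.lift_mk]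
  · intro z hz
    obtain ⟨p, rfl⟩ := Ideal.Quotient.mk_surjective z
    have hev : constantCoeff p = 0 := by
      have : εA (Ideal.Quotient.mk nodeIdeal p) = evalO p := rfl
      rw [RingHom.mem_ker, this] at hz
      simpa [evalO] using hz
    have hp : p ∈ (Ideal.span {(X 0 : Pc), X 1}) := by
      have := sub_const_mem p
      rwa [hev, map_zero, sub_zero] at this
    have : Ideal.Quotient.mk nodeIdeal p ∈
        Ideal.map (Ideal.Quotient.mk nodeIdeal) (Ideal.span {(X 0 : Pc), X 1}) :=
      Ideal.mem_map_of_mem _ hp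
    rwa [Ideal.map_span, Set.image_insert_eq, Set.image_singleton] at this

instance : mA.IsPrime := mA_eq_ker ▸ RingHom.ker_isPrime εA

/-- `R`, the localization of `ℂ[x,y]/(xy)` at the maximal ideal `(x,y)`. -/
abbrev Rnode : Type := Localization.AtPrime mA

/-- The element `x` of `R`. -/
def x : Rnode := algebraMap Anode Rnode xA

/-- The element `y` of `R`. -/
def y : Rnode := algebraMap Anode Rnode yA

instance : Algebra ℂ Rnode :=
  ((algebraMap Anode Rnode).comp (algebraMap ℂ Anode)).toAlgebra

namespace NodeAux

/-- x ↦ t, y ↦ 0 -/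
def ψ0 : Pc →+* Polynomial ℂ := (MvPolynomial.aeval ![(Polynomial.X : Polynomial ℂ), 0]).toRingHom

def ψ1 : Pc →+* Polynomial ℂ := (MvPolynomial.aeval ![0, (Polynomial.X : Polynomial ℂ)]).toRingHom

def ι0 : Polynomial ℂ →+* Pc := (Polynomial.aeval (X 0 : Pc)).toRingHom
def ι1 : Polynomial ℂ →+* Pc := (Polynomial.aeval (X 1 : Pc)).toRingHom

def mkA : Pc →+* Anode := Ideal.Quotient.mk nodeIdeal

lemma xA_mul_yA : xA * yA = 0 := by
  rw [xA, yA, ← map_mul, Ideal.Quotient.eq_zero_iff_mem]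
  exact Ideal.subset_span rfl

lemma mkA_C (c : ℂ) : mkA (C c) = algebraMap ℂ Anode c := rfl

lemma L1 (g : Polynomial ℂ) : mkA (ι1 g) * xA = algebraMap ℂ Anode (g.coeff 0) * xA := by
  conv_lhs => rw [← Polynomial.X_mul_divX_add g]
  rw [map_add, map_mul, map_add, map_mul]
  simp only [ι1, AlgHom.toRingHom_eq_coe, RingHom.coe_coe, Polynomial.aeval_X, Polynomial.aeval_C]
  have h1 : mkA (X 1) = yA := rfl
  have hC : mkA ((algebraMap ℂ Pc) (g.coeff 0)) = algebraMap ℂ Anode (g.coeff 0) := rfl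
  rw [h1, hC, add_mul]
  have : yA * mkA (Polynomial.aeval (X 1) g.divX) * xA
      = mkA (Polynomial.aeval (X 1) g.divX) * (xA * yA) := by ring
  rw [this, xA_mul_yA, mul_zero, zero_add]

lemma L0 (g : Polynomial ℂ) : mkA (ι0 g) * yA = algebraMap ℂ Anode (g.coeff 0) * yA := by
  conv_lhs => rw [← Polynomial.X_mul_divX_add g]
  rw [map_add, map_mul, map_add, map_mul]
  simp only [ι0, AlgHom.toRingHom_eq_coe, RingHom.coe_coe, Polynomial.aeval_X, Polynomial.aeval_C]
  have h1 : mkA (X 0) = xA := rfl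
  have hC : mkA ((algebraMap ℂ Pc) (g.coeff 0)) = algebraMap ℂ Anode (g.coeff 0) := rfl
  rw [h1, hC, add_mul]
  have : xA * mkA (Polynomial.aeval (X 0) g.divX) * yA
      = mkA (Polynomial.aeval (X 0) g.divX) * (xA * yA) := by ring
  rw [this, xA_mul_yA, mul_zero, zero_add]

lemma coeff0_ψ1 (p : Pc) : (ψ1 p).coeff 0 = evalO p := by
  have : (Polynomial.evalRingHom (0:ℂ)).comp ψ1 = evalO := by
    apply MvPolynomial.ringHom_ext
    · intro c; simp [ψ1, evalO]
    · intro i; fin_cases i <;> simp [ψ1, evalO]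
  rw [Polynomial.coeff_zero_eq_eval_zero, ← this]; rfl

lemma coeff0_ψ0 (p : Pc) : (ψ0 p).coeff 0 = evalO p := by
  have : (Polynomial.evalRingHom (0:ℂ)).comp ψ0 = evalO := by
    apply MvPolynomial.ringHom_ext
    · intro c; simp [ψ0, evalO]
    · intro i; fin_cases i <;> simp [ψ0, evalO]
  rw [Polynomial.coeff_zero_eq_eval_zero, ← this]; rfl

lemma decomp (p : Pc) :
    mkA p = mkA (ι0 (ψ0 p)) + mkA (ι1 (ψ1 p)) - algebraMap ℂ Anode (evalO p) := by
  induction p using MvPolynomial.induction_on with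
  | C a =>
      have e0 : ψ0 (C a) = Polynomial.C a := by simp [ψ0]
      have e1 : ψ1 (C a) = Polynomial.C a := by simp [ψ1]
      have e2 : evalO (C a) = a := by simp [evalO]
      have e3 : ι0 (Polynomial.C a) = C a := by simp [ι0]
      have e4 : ι1 (Polynomial.C a) = C a := by simp [ι1]
      rw [e0, e1, e2, e3, e4, mkA_C]; ring
  | add p q hp hq =>
      simp only [map_add] at *
      rw [hp, hq]; ring
  | mul_X p i hp =>
      fin_cases i
      · show mkA (p * X 0) = mkA (ι0 (ψ0 (p * X 0))) + mkA (ι1 (ψ1 (p * X 0)))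
            - algebraMap ℂ Anode (evalO (p * X 0))
        have hx : mkA (p * X 0) = mkA p * xA := by rw [map_mul]; rfl
        have h0 : ψ0 (p * X 0) = ψ0 p * Polynomial.X := by
          rw [map_mul]; congr 1; simp [ψ0]
        have h1 : ψ1 (p * X 0) = 0 := by
          rw [map_mul]
          have : ψ1 (X 0) = 0 := by simp [ψ1]
          rw [this, mul_zero]
        have hev : evalO (p * X 0) = 0 := by
          rw [map_mul]
          have : evalO (X 0) = 0 := by simp [evalO]
          rw [this, mul_zero]
        rw [hx, hp, h0, h1, hev, map_zero, map_zero, map_zero]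
        rw [map_mul, map_mul]
        have hι : mkA (ι0 Polynomial.X) = xA := by
          have : ι0 Polynomial.X = X 0 := by simp [ι0]
          rw [this]; rfl
        rw [hι, sub_mul, add_mul, L1 (ψ1 p), coeff0_ψ1]
        ring
      · show mkA (p * X 1) = mkA (ι0 (ψ0 (p * X 1))) + mkA (ι1 (ψ1 (p * X 1)))
            - algebraMap ℂ Anode (evalO (p * X 1))
        have hx : mkA (p * X 1) = mkA p * yA := by rw [map_mul]; rfl
        have h1 : ψ1 (p * X 1) = ψ1 p * Polynomial.X := by
          rw [map_mul]; congr 1; simp [ψ1]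
        have h0 : ψ0 (p * X 1) = 0 := by
          rw [map_mul]
          have : ψ0 (X 1) = 0 := by simp [ψ0]
          rw [this, mul_zero]
        have hev : evalO (p * X 1) = 0 := by
          rw [map_mul]
          have : evalO (X 1) = 0 := by simp [evalO]
          rw [this, mul_zero]
        rw [hx, hp, h0, h1, hev, map_zero, map_zero, map_zero]
        rw [map_mul, map_mul]
        have hι : mkA (ι1 Polynomial.X) = yA := by
          have : ι1 Polynomial.X = X 1 := by simp [ι1]
          rw [this]; rfl
        rw [hι, sub_mul, add_mul, L0 (ψ0 p), coeff0_ψ0]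
        ring


lemma εA_mk (p : Pc) : εA (mkA p) = evalO p := rfl

lemma not_mem_mA_iff (a : Anode) : a ∉ mA ↔ εA a ≠ 0 := by
  rw [mA_eq_ker]; simp [RingHom.mem_ker]

lemma εA_unit : ∀ s : mA.primeCompl, IsUnit (εA s) := fun s =>
  isUnit_iff_ne_zero.mpr ((not_mem_mA_iff _).mp s.2)

def εR : Rnode →+* ℂ := IsLocalization.lift (M := mA.primeCompl) εA_unit

lemma εR_alg (a : Anode) : εR (algebraMap Anode Rnode a) = εA a :=
  IsLocalization.lift_eq εA_unit a

def Φ0 : Pc →+* PowerSeries ℂ :=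
  (MvPolynomial.aeval ![(PowerSeries.X : PowerSeries ℂ), 0]).toRingHom

def Φ1 : Pc →+* PowerSeries ℂ :=
  (MvPolynomial.aeval ![0, (PowerSeries.X : PowerSeries ℂ)]).toRingHom

lemma node_le_ker0 : nodeIdeal ≤ RingHom.ker Φ0 := by
  rw [nodeIdeal, Ideal.span_le, Set.singleton_subset_iff]
  simp [Φ0, RingHom.mem_ker]

lemma node_le_ker1 : nodeIdeal ≤ RingHom.ker Φ1 := by
  rw [nodeIdeal, Ideal.span_le, Set.singleton_subset_iff]
  simp [Φ1, RingHom.mem_ker]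

def Φ0' : Anode →+* PowerSeries ℂ := Ideal.Quotient.lift nodeIdeal Φ0 node_le_ker0
def Φ1' : Anode →+* PowerSeries ℂ := Ideal.Quotient.lift nodeIdeal Φ1 node_le_ker1

lemma cc_Φ0' : (PowerSeries.constantCoeff (R := ℂ)).comp Φ0' = εA := by
  apply Ideal.Quotient.ringHom_ext
  apply MvPolynomial.ringHom_ext
  · intro c
    simp [Φ0', Φ0, εA, evalO, PowerSeries.algebraMap_apply]
  · intro i
    fin_cases i <;> simp [Φ0', Φ0, εA, evalO, PowerSeries.algebraMap_apply]

lemma cc_Φ1' : (PowerSeries.constantCoeff (R := ℂ)).comp Φ1' = εA := by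
  apply Ideal.Quotient.ringHom_ext
  apply MvPolynomial.ringHom_ext
  · intro c
    simp [Φ1', Φ1, εA, evalO, PowerSeries.algebraMap_apply]
  · intro i
    fin_cases i <;> simp [Φ1', Φ1, εA, evalO, PowerSeries.algebraMap_apply]

lemma Φ0'_unit : ∀ s : mA.primeCompl, IsUnit (Φ0' s) := by
  intro s
  rw [PowerSeries.isUnit_iff_constantCoeff]
  have : (PowerSeries.constantCoeff (R := ℂ)) (Φ0' s) = εA s := by
    rw [← cc_Φ0']; rfl
  rw [this]
  exact εA_unit s

lemma Φ1'_unit : ∀ s : mA.primeCompl, IsUnit (Φ1' s) := by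
  intro s
  rw [PowerSeries.isUnit_iff_constantCoeff]
  have : (PowerSeries.constantCoeff (R := ℂ)) (Φ1' s) = εA s := by
    rw [← cc_Φ1']; rfl
  rw [this]
  exact εA_unit s

def φx : Rnode →+* PowerSeries ℂ := IsLocalization.lift (M := mA.primeCompl) Φ0'_unit
def φy : Rnode →+* PowerSeries ℂ := IsLocalization.lift (M := mA.primeCompl) Φ1'_unit

lemma φx_alg (a : Anode) : φx (algebraMap Anode Rnode a) = Φ0' a :=
  IsLocalization.lift_eq Φ0'_unit a
lemma φy_alg (a : Anode) : φy (algebraMap Anode Rnode a) = Φ1' a :=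
  IsLocalization.lift_eq Φ1'_unit a

lemma φx_x : φx x = PowerSeries.X := by
  rw [x, φx_alg]
  show Φ0 (X 0) = _
  simp [Φ0]

lemma φx_y : φx y = 0 := by
  rw [y, φx_alg]
  show Φ0 (X 1) = _
  simp [Φ0]

lemma φy_y : φy y = PowerSeries.X := by
  rw [y, φy_alg]
  show Φ1 (X 1) = _
  simp [Φ1]

lemma φy_x : φy x = 0 := by
  rw [x, φy_alg]
  show Φ1 (X 0) = _
  simp [Φ1]

lemma algC_eq (a : ℂ) : algebraMap ℂ Rnode a = algebraMap Anode Rnode (mkA (C a)) := rfl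

lemma φx_C (a : ℂ) : φx (algebraMap ℂ Rnode a) = PowerSeries.C (R := ℂ) a := by
  rw [algC_eq, φx_alg]
  show Φ0 (C a) = _
  simp [Φ0]

lemma φy_C (a : ℂ) : φy (algebraMap ℂ Rnode a) = PowerSeries.C (R := ℂ) a := by
  rw [algC_eq, φy_alg]
  show Φ1 (C a) = _
  simp [Φ1]

lemma εR_C (a : ℂ) : εR (algebraMap ℂ Rnode a) = a := by
  rw [algC_eq, εR_alg, εA_mk]
  simp [evalO]

lemma cc_φx (z : Rnode) : PowerSeries.constantCoeff (R := ℂ) (φx z) = εR z := by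
  have : (PowerSeries.constantCoeff (R := ℂ)).comp φx = εR := by
    apply IsLocalization.ringHom_ext (M := mA.primeCompl)
    rw [RingHom.comp_assoc]
    have h1 : φx.comp (algebraMap Anode Rnode) = Φ0' := by
      apply RingHom.ext; intro a; exact φx_alg a
    have h2 : εR.comp (algebraMap Anode Rnode) = εA := by
      apply RingHom.ext; intro a; exact εR_alg a
    rw [h1, h2, cc_Φ0']
  rw [← this]; rfl

lemma cc_φy (z : Rnode) : PowerSeries.constantCoeff (R := ℂ) (φy z) = εR z := by
  have : (PowerSeries.constantCoeff (R := ℂ)).comp φy = εR := by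
    apply IsLocalization.ringHom_ext (M := mA.primeCompl)
    rw [RingHom.comp_assoc]
    have h1 : φy.comp (algebraMap Anode Rnode) = Φ1' := by
      apply RingHom.ext; intro a; exact φy_alg a
    have h2 : εR.comp (algebraMap Anode Rnode) = εA := by
      apply RingHom.ext; intro a; exact εR_alg a
    rw [h1, h2, cc_Φ1']
  rw [← this]; rfl

lemma isUnit_iff_εR (z : Rnode) : IsUnit z ↔ εR z ≠ 0 := by
  constructor
  · intro h
    exact (h.map εR).ne_zero
  · intro h
    obtain ⟨a, s, rfl⟩ := IsLocalization.exists_mk'_eq mA.primeCompl z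
    have hs := IsLocalization.map_units Rnode s
    have hspec := IsLocalization.mk'_spec Rnode a s
    have ha : εA a ≠ 0 := by
      intro h0
      apply h
      have := congrArg εR hspec
      rw [map_mul, εR_alg, εR_alg, h0] at this
      have hsne : εA s ≠ 0 := (not_mem_mA_iff _).mp s.2
      exact (mul_eq_zero.mp this).resolve_right hsne
    have haU : IsUnit (algebraMap Anode Rnode a) :=
      IsLocalization.map_units Rnode (⟨a, (not_mem_mA_iff a).mpr ha⟩ : mA.primeCompl)
    exact isUnit_of_mul_isUnit_left (hspec ▸ haU)


lemma order_assoc {p q : PowerSeries ℂ} (h : Associated p q) : p.order = q.order := by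
  obtain ⟨u, rfl⟩ := h
  rw [PowerSeries.order_mul, PowerSeries.order_zero_of_unit u.isUnit, add_zero]

lemma smul_eq (a : ℂ) (w : Rnode) : a • w = algebraMap ℂ Rnode a * w := by
  induction w using Localization.induction_on with
  | H p =>
    rcases p with ⟨r, s⟩
    rw [Localization.smul_mk]
    rw [show a • r = algebraMap ℂ Anode a * r from Algebra.smul_def a r]
    rw [show algebraMap ℂ Rnode a = algebraMap Anode Rnode (algebraMap ℂ Anode a) from rfl]
    rw [← Localization.mk_one_eq_algebraMap, Localization.mk_mul, one_mul]

lemma φx_xpow (α : ℕ) : φx (x ^ α) = PowerSeries.X ^ α := by rw [map_pow, φx_x]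
lemma φy_ypow (β : ℕ) : φy (y ^ β) = PowerSeries.X ^ β := by rw [map_pow, φy_y]
lemma φx_ypow {β : ℕ} (hβ : 1 ≤ β) : φx (y ^ β) = 0 := by
  rw [map_pow, φx_y, zero_pow (by omega)]
lemma φy_xpow {α : ℕ} (hα : 1 ≤ α) : φy (x ^ α) = 0 := by
  rw [map_pow, φy_x, zero_pow (by omega)]

lemma φx_mixed {α β : ℕ} (hβ : 1 ≤ β) (a : ℂ) :
    φx (x ^ α + a • y ^ β) = PowerSeries.X ^ α := by
  rw [map_add, φx_xpow, smul_eq, map_mul, φx_ypow hβ, mul_zero, add_zero]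

lemma φy_mixed {α β : ℕ} (hα : 1 ≤ α) (a : ℂ) :
    φy (x ^ α + a • y ^ β) = PowerSeries.C (R := ℂ) a * PowerSeries.X ^ β := by
  rw [map_add, φy_xpow hα, smul_eq, map_mul, φy_ypow, φy_C, zero_add]

lemma order_C_mul_X_pow {a : ℂ} (ha : a ≠ 0) (β : ℕ) :
    (PowerSeries.C (R := ℂ) a * PowerSeries.X ^ β).order = (β : ℕ∞) := by
  rw [PowerSeries.order_mul, PowerSeries.order_X_pow,
    PowerSeries.order_zero_of_unit, zero_add]
  rw [PowerSeries.isUnit_iff_constantCoeff]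
  simpa using ha.isUnit

lemma mixed_triple {α β α' β' : ℕ} {a a' : ℂ}
    (hα : 1 ≤ α) (hβ : 1 ≤ β) (ha : a ≠ 0) (hα' : 1 ≤ α') (hβ' : 1 ≤ β') (ha' : a' ≠ 0)
    (h : Associated (x ^ α + a • y ^ β) (x ^ α' + a' • y ^ β')) :
    α = α' ∧ β = β' ∧ a = a' := by
  obtain ⟨u, hu⟩ := h
  have hx := congrArg φx hu
  have hy := congrArg φy hu
  rw [map_mul, φx_mixed hβ, φx_mixed hβ'] at hx
  rw [map_mul, φy_mixed hα, φy_mixed hα'] at hy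
  have hαα : α = α' := by
    have := congrArg PowerSeries.order hx
    rw [PowerSeries.order_mul, PowerSeries.order_zero_of_unit (u.isUnit.map φx), add_zero,
      PowerSeries.order_X_pow, PowerSeries.order_X_pow] at this
    exact_mod_cast this
  have hββ : β = β' := by
    have := congrArg PowerSeries.order hy
    rw [PowerSeries.order_mul, PowerSeries.order_zero_of_unit (u.isUnit.map φy), add_zero,
      order_C_mul_X_pow ha, order_C_mul_X_pow ha'] at this
    exact_mod_cast this
  refine ⟨hαα, hββ, ?_⟩
  subst hαα hββ
  have hXne : (PowerSeries.X : PowerSeries ℂ) ^ α ≠ 0 :=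
    pow_ne_zero _ PowerSeries.X_ne_zero
  have hu1 : φx u.val = 1 := by
    have : PowerSeries.X ^ α * φx u.val = PowerSeries.X ^ α * 1 := by
      rw [mul_one]; exact hx
    exact mul_left_cancel₀ hXne this
  have hεu : εR u.val = 1 := by
    have := congrArg (PowerSeries.constantCoeff (R := ℂ)) hu1
    rwa [cc_φx, map_one] at this
  have hyc : PowerSeries.X ^ β * (PowerSeries.C (R := ℂ) a * φy u.val)
      = PowerSeries.X ^ β * PowerSeries.C (R := ℂ) a' := by
    linear_combination hy
  have h2 : PowerSeries.C (R := ℂ) a * φy u.val = PowerSeries.C (R := ℂ) a' :=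
    mul_left_cancel₀ (pow_ne_zero β PowerSeries.X_ne_zero) hyc
  have hcc := congrArg (PowerSeries.constantCoeff (R := ℂ)) h2
  rwa [map_mul, cc_φy, hεu, mul_one, PowerSeries.constantCoeff_C,
    PowerSeries.constantCoeff_C] at hcc


def Form (w : Rnode) : Prop :=
  (∃ α : ℕ, 1 ≤ α ∧ w = x ^ α) ∨ (∃ β : ℕ, 1 ≤ β ∧ w = y ^ β) ∨
    (∃ α β : ℕ, ∃ a : ℂ, 1 ≤ α ∧ 1 ≤ β ∧ a ≠ 0 ∧ w = x ^ α + a • y ^ β)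

lemma Ox_xpow (α : ℕ) : (φx (x ^ α)).order = (α : ℕ∞) := by
  rw [φx_xpow, PowerSeries.order_X_pow]
lemma Oy_xpow {α : ℕ} (hα : 1 ≤ α) : (φy (x ^ α)).order = ⊤ := by
  rw [φy_xpow hα, PowerSeries.order_zero]
lemma Ox_ypow {β : ℕ} (hβ : 1 ≤ β) : (φx (y ^ β)).order = ⊤ := by
  rw [φx_ypow hβ, PowerSeries.order_zero]
lemma Oy_ypow (β : ℕ) : (φy (y ^ β)).order = (β : ℕ∞) := by
  rw [φy_ypow, PowerSeries.order_X_pow]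
lemma Ox_mixed {α β : ℕ} (hβ : 1 ≤ β) (a : ℂ) :
    (φx (x ^ α + a • y ^ β)).order = (α : ℕ∞) := by
  rw [φx_mixed hβ, PowerSeries.order_X_pow]
lemma Oy_mixed {α β : ℕ} (hα : 1 ≤ α) {a : ℂ} (ha : a ≠ 0) :
    (φy (x ^ α + a • y ^ β)).order = (β : ℕ∞) := by
  rw [φy_mixed hα, order_C_mul_X_pow ha]

lemma Ox_assoc {v w : Rnode} (h : Associated v w) : (φx v).order = (φx w).order :=
  order_assoc (h.map φx)
lemma Oy_assoc {v w : Rnode} (h : Associated v w) : (φy v).order = (φy w).order :=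
  order_assoc (h.map φy)

lemma list_assoc_eq {w w' : Rnode} (hw : Form w) (hw' : Form w') (h : Associated w w') :
    w = w' := by
  rcases hw with ⟨α, hα, rfl⟩ | ⟨β, hβ, rfl⟩ | ⟨α, β, a, hα, hβ, ha, rfl⟩ <;>
    rcases hw' with ⟨α', hα', rfl⟩ | ⟨β', hβ', rfl⟩ | ⟨α', β', a', hα', hβ', ha', rfl⟩
  · have h2 := Ox_assoc h
    rw [Ox_xpow, Ox_xpow] at h2
    norm_cast at h2; rw [h2]
  · have h2 := Ox_assoc h
    rw [Ox_xpow, Ox_ypow hβ'] at h2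
    simp at h2
  · have h2 := Oy_assoc h
    rw [Oy_xpow hα, Oy_mixed hα' ha'] at h2
    simp at h2
  · have h2 := Ox_assoc h
    rw [Ox_ypow hβ, Ox_xpow] at h2
    simp at h2
  · have h2 := Oy_assoc h
    rw [Oy_ypow, Oy_ypow] at h2
    norm_cast at h2; rw [h2]
  · have h2 := Ox_assoc h
    rw [Ox_ypow hβ, Ox_mixed hβ' a'] at h2
    simp at h2
  · have h2 := Oy_assoc h
    rw [Oy_mixed hα ha, Oy_xpow hα'] at h2
    simp at h2
  · have h2 := Ox_assoc h
    rw [Ox_mixed hβ a, Ox_ypow hβ'] at h2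
    simp at h2
  · obtain ⟨h1, h2, h3⟩ := mixed_triple hα hβ ha hα' hβ' ha' h
    rw [h1, h2, h3]


lemma evalO_ι0 (q : Polynomial ℂ) : evalO (ι0 q) = q.coeff 0 := by
  have h : evalO.comp ι0 = Polynomial.evalRingHom (0:ℂ) := by
    apply Polynomial.ringHom_ext
    · intro c; simp [ι0, evalO]
    · simp [ι0, evalO]
  rw [Polynomial.coeff_zero_eq_eval_zero, ← Polynomial.coe_evalRingHom, ← h]; rfl

lemma evalO_ι1 (q : Polynomial ℂ) : evalO (ι1 q) = q.coeff 0 := by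
  have h : evalO.comp ι1 = Polynomial.evalRingHom (0:ℂ) := by
    apply Polynomial.ringHom_ext
    · intro c; simp [ι1, evalO]
    · simp [ι1, evalO]
  rw [Polynomial.coeff_zero_eq_eval_zero, ← Polynomial.coe_evalRingHom, ← h]; rfl

lemma εA_C (c : ℂ) : εA (algebraMap ℂ Anode c) = c := by
  rw [← mkA_C, εA_mk]; simp [evalO]

lemma poly_factor {f : Polynomial ℂ} (hf : f ≠ 0) (h0 : f.coeff 0 = 0) :
    ∃ (α : ℕ) (q : Polynomial ℂ), 1 ≤ α ∧ f = Polynomial.X ^ α * q ∧ q.coeff 0 ≠ 0 := by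
  obtain ⟨q, hq, hnd⟩ := Polynomial.exists_eq_pow_rootMultiplicity_mul_and_not_dvd f hf 0
  rw [map_zero, sub_zero] at hq hnd
  refine ⟨_, q, ?_, hq, fun hc => hnd (Polynomial.X_dvd_iff.mpr hc)⟩
  have hr : f.IsRoot 0 := by
    rwa [Polynomial.IsRoot, ← Polynomial.coeff_zero_eq_eval_zero]
  exact (Polynomial.rootMultiplicity_pos hf).mpr hr

lemma mkA_ι0_X : mkA (ι0 Polynomial.X) = xA := by
  have : ι0 Polynomial.X = X 0 := by simp [ι0]
  rw [this]; rfl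

lemma mkA_ι1_X : mkA (ι1 Polynomial.X) = yA := by
  have : ι1 Polynomial.X = X 1 := by simp [ι1]
  rw [this]; rfl

lemma L1pow (g : Polynomial ℂ) {α : ℕ} (hα : 1 ≤ α) :
    mkA (ι1 g) * xA ^ α = algebraMap ℂ Anode (g.coeff 0) * xA ^ α := by
  obtain ⟨α', rfl⟩ : ∃ α', α = α' + 1 := ⟨α - 1, by omega⟩
  rw [pow_succ', ← mul_assoc, L1, mul_assoc]

lemma L0pow (g : Polynomial ℂ) {β : ℕ} (hβ : 1 ≤ β) :
    mkA (ι0 g) * yA ^ β = algebraMap ℂ Anode (g.coeff 0) * yA ^ β := by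
  obtain ⟨β', rfl⟩ : ∃ β', β = β' + 1 := ⟨β - 1, by omega⟩
  rw [pow_succ', ← mul_assoc, L0, mul_assoc]

lemma alg_unit {b : Anode} (hb : εA b ≠ 0) : IsUnit (algebraMap Anode Rnode b) := by
  rw [isUnit_iff_εR, εR_alg]; exact hb

lemma x_pow_eq (α : ℕ) : x ^ α = algebraMap Anode Rnode (xA ^ α) := by
  rw [map_pow]; rfl
lemma y_pow_eq (β : ℕ) : y ^ β = algebraMap Anode Rnode (yA ^ β) := by
  rw [map_pow]; rfl

lemma exists_form (z : Rnode) (hz : z ≠ 0) (hu : ¬ IsUnit z) :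
    ∃ w, Form w ∧ Associated z w := by
  obtain ⟨a, s, rfl⟩ := IsLocalization.exists_mk'_eq mA.primeCompl z
  have hspec : IsLocalization.mk' Rnode a s * algebraMap Anode Rnode s
      = algebraMap Anode Rnode a := IsLocalization.mk'_spec Rnode a s
  have hsU : IsUnit (algebraMap Anode Rnode (s : Anode)) := IsLocalization.map_units Rnode s
  have hza : Associated (IsLocalization.mk' Rnode a s) (algebraMap Anode Rnode a) :=
    ⟨hsU.unit, by rw [IsUnit.unit_spec]; exact hspec⟩
  have hεz : εR (IsLocalization.mk' Rnode a s) = 0 := by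
    by_contra hc; exact hu ((isUnit_iff_εR _).mpr hc)
  have hεa : εA a = 0 := by
    have h2 := congrArg εR hspec
    rw [map_mul, εR_alg, εR_alg, hεz, zero_mul] at h2
    exact h2.symm
  have hane : algebraMap Anode Rnode a ≠ 0 := by
    intro h0
    exact hz ((associated_zero_iff_eq_zero _).mp (h0 ▸ hza))
  obtain ⟨p, hp⟩ := Ideal.Quotient.mk_surjective a
  have hp' : mkA p = a := hp
  have hev : evalO p = 0 := by rw [← εA_mk, hp', hεa]
  have hdec : a = mkA (ι0 (ψ0 p)) + mkA (ι1 (ψ1 p)) := by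
    have h3 := decomp p
    rw [hp', hev, map_zero, sub_zero] at h3
    exact h3
  have hf0 : (ψ0 p).coeff 0 = 0 := by rw [coeff0_ψ0, hev]
  have hg0 : (ψ1 p).coeff 0 = 0 := by rw [coeff0_ψ1, hev]
  by_cases hf : ψ0 p = 0 <;> by_cases hg : ψ1 p = 0
  · exfalso
    rw [hf, hg] at hdec
    simp only [map_zero, add_zero] at hdec
    rw [hdec, map_zero] at hane
    exact hane rfl
  · -- f = 0, g ≠ 0 : pure y case
    obtain ⟨β, r, hβ, hgr, hr0⟩ := poly_factor hg hg0
    have ha2 : a = yA ^ β * mkA (ι1 r) := by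
      rw [hdec, hf, map_zero, map_zero, zero_add, hgr, map_mul, map_pow, map_mul, map_pow,
        mkA_ι1_X]
    refine ⟨y ^ β, Or.inr (Or.inl ⟨β, hβ, rfl⟩), hza.trans ?_⟩
    have hQ : IsUnit (algebraMap Anode Rnode (mkA (ι1 r))) := by
      apply alg_unit; rw [εA_mk, evalO_ι1]; exact hr0
    have : algebraMap Anode Rnode a = y ^ β * algebraMap Anode Rnode (mkA (ι1 r)) := by
      rw [ha2, map_mul, y_pow_eq]
    rw [this]
    exact associated_mul_unit_left _ _ hQ
  · -- f ≠ 0, g = 0 : pure x case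
    obtain ⟨α, q, hα, hfq, hq0⟩ := poly_factor hf hf0
    have ha2 : a = xA ^ α * mkA (ι0 q) := by
      rw [hdec, hg, map_zero, map_zero, add_zero, hfq, map_mul, map_pow, map_mul, map_pow,
        mkA_ι0_X]
    refine ⟨x ^ α, Or.inl ⟨α, hα, rfl⟩, hza.trans ?_⟩
    have hQ : IsUnit (algebraMap Anode Rnode (mkA (ι0 q))) := by
      apply alg_unit; rw [εA_mk, evalO_ι0]; exact hq0
    have : algebraMap Anode Rnode a = x ^ α * algebraMap Anode Rnode (mkA (ι0 q)) := by
      rw [ha2, map_mul, x_pow_eq]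
    rw [this]
    exact associated_mul_unit_left _ _ hQ
  · -- mixed case
    obtain ⟨α, q, hα, hfq, hq0⟩ := poly_factor hf hf0
    obtain ⟨β, r, hβ, hgr, hr0⟩ := poly_factor hg hg0
    set Q := mkA (ι0 q) with hQdef
    set Rr := mkA (ι1 r) with hRdef
    set q0 := q.coeff 0
    set r0 := r.coeff 0
    set cA := algebraMap ℂ Anode
    have ha2 : a = xA ^ α * Q + yA ^ β * Rr := by
      rw [hdec, hfq, hgr, map_mul, map_pow, map_mul, map_pow, mkA_ι0_X,
        map_mul, map_pow, map_mul, map_pow, mkA_ι1_X]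
    have e1 : (Q - cA q0 + cA (q0 / r0) * Rr) * xA ^ α = Q * xA ^ α := by
      have h1 : Rr * xA ^ α = cA r0 * xA ^ α := L1pow r hα
      calc (Q - cA q0 + cA (q0 / r0) * Rr) * xA ^ α
          = Q * xA ^ α - cA q0 * xA ^ α + cA (q0 / r0) * (Rr * xA ^ α) := by ring
        _ = Q * xA ^ α - cA q0 * xA ^ α + cA (q0 / r0) * (cA r0 * xA ^ α) := by rw [h1]
        _ = Q * xA ^ α + (cA (q0 / r0) * cA r0 - cA q0) * xA ^ α := by ring
        _ = Q * xA ^ α := by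
            rw [← map_mul, div_mul_cancel₀ _ hr0, sub_self, zero_mul, add_zero]
    have e2 : (Q - cA q0 + cA (q0 / r0) * Rr) * yA ^ β = cA (q0 / r0) * (Rr * yA ^ β) := by
      have h2 : Q * yA ^ β = cA q0 * yA ^ β := L0pow q hβ
      calc (Q - cA q0 + cA (q0 / r0) * Rr) * yA ^ β
          = Q * yA ^ β - cA q0 * yA ^ β + cA (q0 / r0) * (Rr * yA ^ β) := by ring
        _ = cA (q0 / r0) * (Rr * yA ^ β) := by rw [h2]; ring
    have hconst : r0 / q0 * (q0 / r0) = 1 := by field_simp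
    have huw : (Q - cA q0 + cA (q0 / r0) * Rr) * (xA ^ α + cA (r0 / q0) * yA ^ β) = a := by
      rw [ha2, mul_add, e1, ← mul_assoc,
        mul_comm (Q - cA q0 + cA (q0 / r0) * Rr) (cA (r0 / q0)), mul_assoc, e2,
        ← mul_assoc, ← map_mul, hconst, map_one, one_mul]
      ring
    have hεu : εA (Q - cA q0 + cA (q0 / r0) * Rr) = q0 := by
      have hQε : εA Q = q0 := by rw [hQdef, εA_mk, evalO_ι0]
      have hRε : εA Rr = r0 := by rw [hRdef, εA_mk, evalO_ι1]
      rw [map_add, map_sub, map_mul, hQε, hRε, εA_C, εA_C, div_mul_cancel₀ _ hr0]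
      ring
    have huU : IsUnit (algebraMap Anode Rnode (Q - cA q0 + cA (q0 / r0) * Rr)) := by
      apply alg_unit; rw [hεu]; exact hq0
    have halgw : algebraMap Anode Rnode (xA ^ α + cA (r0 / q0) * yA ^ β)
        = x ^ α + (r0 / q0) • y ^ β := by
      rw [map_add, map_mul, x_pow_eq, y_pow_eq, smul_eq]
      rfl
    refine ⟨x ^ α + (r0 / q0) • y ^ β,
      Or.inr (Or.inr ⟨α, β, r0 / q0, hα, hβ, div_ne_zero hr0 hq0, rfl⟩), hza.trans ?_⟩
    have hfin : algebraMap Anode Rnode a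
        = algebraMap Anode Rnode (xA ^ α + cA (r0 / q0) * yA ^ β)
          * algebraMap Anode Rnode (Q - cA q0 + cA (q0 / r0) * Rr) := by
      rw [← map_mul, mul_comm, huw]
    rw [hfin, halgw]
    exact associated_mul_unit_left _ _ huU

end NodeAux

theorem classification_of_nonunits (z : Rnode) (hz : z ≠ 0) (hu : ¬ IsUnit z) :
    (∃! w : Rnode,
      ((∃ α : ℕ, 1 ≤ α ∧ w = x ^ α) ∨
        (∃ β : ℕ, 1 ≤ β ∧ w = y ^ β) ∨
        (∃ α β : ℕ, ∃ a : ℂ, 1 ≤ α ∧ 1 ≤ β ∧ a ≠ 0 ∧ w = x ^ α + a • y ^ β)) ∧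
      Associated z w) ∧
    (∀ α β : ℕ, ∀ a : ℂ, ∀ α' β' : ℕ, ∀ a' : ℂ,
      1 ≤ α → 1 ≤ β → a ≠ 0 → 1 ≤ α' → 1 ≤ β' → a' ≠ 0 →
      Associated z (x ^ α + a • y ^ β) → Associated z (x ^ α' + a' • y ^ β') →
      α = α' ∧ β = β' ∧ a = a') := by
  obtain ⟨w, hw, hzw⟩ := NodeAux.exists_form z hz hu
  constructor
  · refine ⟨w, ⟨hw, hzw⟩, ?_⟩
    rintro w' ⟨hw', hzw'⟩
    exact NodeAux.list_assoc_eq hw' hw (hzw'.symm.trans hzw)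
  · intro α β a α' β' a' hα hβ ha hα' hβ' ha' h1 h2
    exact NodeAux.mixed_triple hα hβ ha hα' hβ' ha' (h1.symm.trans h2)

end
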